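/- Let G be a graph, B ⊆ V(G), and S ⊇ B a vertex cover of G with |S| = δ(G−B) + p for some p ≥ 0. Let k ≥ 0 be an integer and X ⊆ I = V(G)\S with |X| = δ(G−B) − 3p. If G has a cycle C of length 2δ(G−B) + k, then G has a cycle C' of the same length 2δ(G−B) + k, containing all vertices of X, and satisfying V(C) ∩ S = V(C') ∩ S. -/

import Mathlib

/-- `deltaB G B` is the minimum degree of the induced subgraph `G - B`. -/
noncomputable def deltaB {V : Type*} [Fintype V] [DecidableEq V] (G : SimpleGraph V)
    [DecidableRel G.Adj] (B : Finset V) : ℕ :=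
  sInf { d : ℕ | ∃ v, v ∉ B ∧ ((G.neighborFinset v).filter (· ∉ B)).card = d }

namespace StmtAux

open SimpleGraph

variable {V : Type*} {G : SimpleGraph V}

/-- Transport a walk along a vertex map preserving adjacency on the walk's edges. -/
def mapW (f : V → V) : ∀ {u w : V} (p : G.Walk u w),
    (∀ a b, s(a, b) ∈ p.edges → G.Adj (f a) (f b)) → G.Walk (f u) (f w)
  | _, _, .nil, _ => .nil
  | _, _, .cons _ p, h =>
      .cons (h _ _ (by simp)) (mapW f p fun a b hab => h a b (by simp [hab]))

@[simp] lemma support_mapW (f : V → V) : ∀ {u w : V} (p : G.Walk u w) (h),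
    (mapW f p h).support = p.support.map f
  | _, _, .nil, _ => rfl
  | _, _, .cons _ p, h => by
      simp only [mapW, Walk.support_cons, List.map_cons, List.cons.injEq, true_and]
      exact support_mapW f p _

@[simp] lemma edges_mapW (f : V → V) : ∀ {u w : V} (p : G.Walk u w) (h),
    (mapW f p h).edges = p.edges.map (Sym2.map f)
  | _, _, .nil, _ => rfl
  | _, _, .cons _ p, h => by
      simp only [mapW, Walk.edges_cons, List.map_cons, List.cons.injEq, Sym2.map_pair_eq,
        true_and]
      exact edges_mapW f p _

@[simp] lemma length_mapW (f : V → V) : ∀ {u w : V} (p : G.Walk u w) (h),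
    (mapW f p h).length = p.length
  | _, _, .nil, _ => rfl
  | _, _, .cons _ p, h => by
      simp only [mapW, Walk.length_cons, add_left_inj]
      exact length_mapW f p _

lemma isCycle_mapW {v : V} {c : G.Walk v v} (hc : c.IsCycle) (f : V → V)
    (h : ∀ a b, s(a, b) ∈ c.edges → G.Adj (f a) (f b))
    (hinj : ∀ a ∈ c.support, ∀ b ∈ c.support, f a = f b → a = b) :
    (mapW f c h).IsCycle := by
  have h3 := hc.three_le_length
  have henod : c.edges.Nodup := hc.isCircuit.isTrail.edges_nodup
  have htail : c.support.tail.Nodup := ((Walk.isCycle_def c).mp hc).2.2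
  rw [Walk.isCycle_def, Walk.isTrail_def]
  refine ⟨?_, ?_, ?_⟩
  · rw [edges_mapW]
    refine List.Nodup.map_on ?_ henod
    intro e1 he1 e2 he2 heq
    revert he1 he2 heq
    refine Sym2.ind (fun a b => Sym2.ind (fun a' b' => ?_) e2) e1
    intro he1 he2 heq
    have ha := c.fst_mem_support_of_mem_edges he1
    have hb := c.snd_mem_support_of_mem_edges he1
    have ha' := c.fst_mem_support_of_mem_edges he2
    have hb' := c.snd_mem_support_of_mem_edges he2
    rw [Sym2.map_pair_eq, Sym2.map_pair_eq, Sym2.eq_iff] at heq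
    rw [Sym2.eq_iff]
    rcases heq with ⟨h1, h2⟩ | ⟨h1, h2⟩
    · exact Or.inl ⟨hinj a ha a' ha' h1, hinj b hb b' hb' h2⟩
    · exact Or.inr ⟨hinj a ha b' hb' h1, hinj b hb a' ha' h2⟩
  · intro hn
    have hl := length_mapW f c h
    rw [hn] at hl
    simp only [Walk.length_nil] at hl
    omega
  · rw [support_mapW]
    have htm : (c.support.map f).tail = c.support.tail.map f := by
      cases c.support <;> simp
    rw [htm]
    refine List.Nodup.map_on ?_ htail
    intro a ha b hb hab
    exact hinj a (List.mem_of_mem_tail ha) b (List.mem_of_mem_tail hb) hab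

/-- In a path, the start vertex is incident to at most one edge. -/
lemma filter_nbr_start_card [DecidableEq V] {u w : V} {p : G.Walk u w} (hp : p.IsPath)
    (A : Finset V) : (A.filter fun y => s(u, y) ∈ p.edges).card ≤ 1 := by
  classical
  cases p with
  | nil => simp
  | cons ha q =>
    rename_i m
    have hsub : (A.filter fun y => s(u, y) ∈ (Walk.cons ha q).edges) ⊆ {m} := by
      intro y hy
      rw [Finset.mem_filter, Walk.edges_cons, List.mem_cons] at hy
      rcases hy.2 with h1 | h2
      · rw [Sym2.eq_iff] at h1
        rcases h1 with ⟨-, rfl⟩ | ⟨h1, -⟩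
        · exact Finset.mem_singleton_self _
        · exact absurd h1 ha.ne
      · exact absurd (q.fst_mem_support_of_mem_edges h2)
          ((Walk.cons_isPath_iff ha q).mp hp).2
    exact le_trans (Finset.card_le_card hsub) (by simp)

/-- In a path, every vertex is incident to at most two edges. -/
lemma filter_nbr_path_card [DecidableEq V] (z : V) (A : Finset V) :
    ∀ {u w : V} (p : G.Walk u w), p.IsPath →
      (A.filter fun y => s(z, y) ∈ p.edges).card ≤ 2
  | _, _, .nil, _ => by simp
  | u, w, @SimpleGraph.Walk.cons _ _ _ m _ ha q, hp => by
    classical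
    have hq : q.IsPath := ((Walk.cons_isPath_iff ha q).mp hp).1
    by_cases hz : z = u
    · subst hz
      exact le_trans (filter_nbr_start_card hp A) one_le_two
    by_cases hzm : z = m
    · subst hzm
      have hsub : (A.filter fun y => s(z, y) ∈ (Walk.cons ha q).edges) ⊆
          insert u (A.filter fun y => s(z, y) ∈ q.edges) := by
        intro y hy
        rw [Finset.mem_filter, Walk.edges_cons, List.mem_cons] at hy
        rcases hy.2 with h1 | h2
        · rw [Sym2.eq_iff] at h1
          rcases h1 with ⟨h1, -⟩ | ⟨-, rfl⟩
          · exact absurd h1.symm ha.ne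
          · exact Finset.mem_insert_self _ _
        · exact Finset.mem_insert_of_mem (Finset.mem_filter.mpr ⟨hy.1, h2⟩)
      refine le_trans (Finset.card_le_card hsub) (le_trans (Finset.card_insert_le _ _) ?_)
      have := filter_nbr_start_card hq A
      omega
    · have hsub : (A.filter fun y => s(z, y) ∈ (Walk.cons ha q).edges) ⊆
          (A.filter fun y => s(z, y) ∈ q.edges) := by
        intro y hy
        rw [Finset.mem_filter, Walk.edges_cons, List.mem_cons] at hy
        rcases hy.2 with h1 | h2
        · rw [Sym2.eq_iff] at h1
          rcases h1 with ⟨h1, -⟩ | ⟨h1, -⟩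
          · exact absurd h1 hz
          · exact absurd h1 hzm
        · exact Finset.mem_filter.mpr ⟨hy.1, h2⟩
      exact le_trans (Finset.card_le_card hsub) (filter_nbr_path_card z A q hq)

/-- In a cycle, every vertex is incident to at most two edges. -/
lemma filter_nbr_cycle_card [DecidableEq V] {v : V} {c : G.Walk v v} (hc : c.IsCycle)
    (z : V) (A : Finset V) :
    (A.filter fun y => s(z, y) ∈ c.edges).card ≤ 2 := by
  classical
  cases c with
  | nil => exact absurd hc Walk.IsCycle.not_of_nil
  | cons ha q =>
    rename_i m
    have hq : q.IsPath := ((Walk.cons_isCycle_iff q ha).mp hc).1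
    by_cases hz : z = v
    · subst hz
      have hsub : (A.filter fun y => s(z, y) ∈ (Walk.cons ha q).edges) ⊆
          insert m (A.filter fun y => s(z, y) ∈ q.reverse.edges) := by
        intro y hy
        rw [Finset.mem_filter, Walk.edges_cons, List.mem_cons] at hy
        rcases hy.2 with h1 | h2
        · rw [Sym2.eq_iff] at h1
          rcases h1 with ⟨-, rfl⟩ | ⟨h1, -⟩
          · exact Finset.mem_insert_self _ _
          · exact absurd h1 ha.ne
        · refine Finset.mem_insert_of_mem (Finset.mem_filter.mpr ⟨hy.1, ?_⟩)
          rw [Walk.edges_reverse, List.mem_reverse]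
          exact h2
      refine le_trans (Finset.card_le_card hsub) (le_trans (Finset.card_insert_le _ _) ?_)
      have := filter_nbr_start_card hq.reverse A
      omega
    by_cases hzm : z = m
    · subst hzm
      have hsub : (A.filter fun y => s(z, y) ∈ (Walk.cons ha q).edges) ⊆
          insert v (A.filter fun y => s(z, y) ∈ q.edges) := by
        intro y hy
        rw [Finset.mem_filter, Walk.edges_cons, List.mem_cons] at hy
        rcases hy.2 with h1 | h2
        · rw [Sym2.eq_iff] at h1
          rcases h1 with ⟨h1, -⟩ | ⟨-, rfl⟩
          · exact absurd h1.symm ha.ne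
          · exact Finset.mem_insert_self _ _
        · exact Finset.mem_insert_of_mem (Finset.mem_filter.mpr ⟨hy.1, h2⟩)
      refine le_trans (Finset.card_le_card hsub) (le_trans (Finset.card_insert_le _ _) ?_)
      have := filter_nbr_start_card hq A
      omega
    · have hsub : (A.filter fun y => s(z, y) ∈ (Walk.cons ha q).edges) ⊆
          (A.filter fun y => s(z, y) ∈ q.edges) := by
        intro y hy
        rw [Finset.mem_filter, Walk.edges_cons, List.mem_cons] at hy
        rcases hy.2 with h1 | h2
        · rw [Sym2.eq_iff] at h1
          rcases h1 with ⟨h1, -⟩ | ⟨h1, -⟩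
          · exact absurd h1 hz
          · exact absurd h1 hzm
        · exact Finset.mem_filter.mpr ⟨hy.1, h2⟩
      exact le_trans (Finset.card_le_card hsub) (filter_nbr_path_card z A q hq)

end StmtAux

open StmtAux SimpleGraph

/-- Let `S ⊇ B` be a vertex cover of `G` with `|S| = δ(G−B) + p`, `k ≥ 0`, and
`X ⊆ V(G)\S` with `|X| = δ(G−B) − 3p`. If `G` has a cycle `C` of length
`2δ(G−B) + k`, then it also has a cycle `C'` of the same length, containing all
vertices of `X`, and with `V(C) ∩ S = V(C') ∩ S`. -/
theorem stmt_9 {V : Type*} [Fintype V] [DecidableEq V] (G : SimpleGraph V)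
    [DecidableRel G.Adj] (B S : Finset V) (p k : ℕ) (hBS : B ⊆ S)
    (hvc : ∀ u v, G.Adj u v → u ∈ S ∨ v ∈ S)
    (hScard : S.card = deltaB G B + p)
    (X : Finset V) (hX : X ⊆ Sᶜ)
    (hXcard : (X.card : ℤ) = (deltaB G B : ℤ) - 3 * (p : ℤ))
    (v : V) (c : G.Walk v v) (hc : c.IsCycle)
    (hlen : c.length = 2 * deltaB G B + k) :
    ∃ (w : V) (c' : G.Walk w w), c'.IsCycle ∧ c'.length = 2 * deltaB G B + k ∧
      (∀ x ∈ X, x ∈ c'.support) ∧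
      c.support.toFinset ∩ S = c'.support.toFinset ∩ S := by
  classical
  set δ := deltaB G B with hδ
  set supp : Finset V := c.support.toFinset with hsupp
  set slots : Finset V := supp \ S with hslots
  set X' : Finset V := X \ supp with hX'
  -- |supp| ≥ 2δ + k
  have hsupp_card : 2 * δ + k ≤ supp.card := by
    have htn : c.support.tail.Nodup := ((Walk.isCycle_def c).mp hc).2.2
    have h1 : c.support.tail.toFinset ⊆ supp := by
      intro y hy
      rw [List.mem_toFinset] at hy ⊢
      exact List.mem_of_mem_tail hy
    have h2 : c.support.tail.toFinset.card = 2 * δ + k := by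
      rw [List.toFinset_card_of_nodup htn, List.length_tail, c.length_support, hlen]
      omega
    calc 2 * δ + k = c.support.tail.toFinset.card := h2.symm
      _ ≤ supp.card := Finset.card_le_card h1
  -- |slots| + |S| ≥ 2δ + k
  have hslots_card : 2 * δ + k ≤ slots.card + S.card := by
    have h1 : supp ⊆ slots ∪ S := by
      intro y hy
      by_cases hyS : y ∈ S
      · exact Finset.mem_union_right _ hyS
      · exact Finset.mem_union_left _ (Finset.mem_sdiff.mpr ⟨hy, hyS⟩)
    calc 2 * δ + k ≤ supp.card := hsupp_card
      _ ≤ (slots ∪ S).card := Finset.card_le_card h1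
      _ ≤ slots.card + S.card := Finset.card_union_le _ _
  -- for x outside S, at most p non-neighbors in S
  have hnonnbr : ∀ x ∉ S, (S.filter fun z => ¬ G.Adj x z).card ≤ p := by
    intro x hxS
    have hxB : x ∉ B := fun h => hxS (hBS h)
    have h1 : δ ≤ ((G.neighborFinset x).filter (· ∉ B)).card :=
      Nat.sInf_le ⟨x, hxB, rfl⟩
    have h2 : (G.neighborFinset x).filter (· ∉ B) ⊆ S.filter (fun z => G.Adj x z) := by
      intro z hz
      rw [Finset.mem_filter, mem_neighborFinset] at hz
      rcases hvc x z hz.1 with h | h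
      · exact absurd h hxS
      · exact Finset.mem_filter.mpr ⟨h, hz.1⟩
    have h3 : (S.filter fun z => G.Adj x z).card + (S.filter fun z => ¬ G.Adj x z).card
        = S.card := Finset.card_filter_add_card_filter_not _
    have h4 := Finset.card_le_card h2
    omega
  set r : V → Finset V := fun x =>
    (slots.filter fun y => ∀ z, s(y, z) ∈ c.edges → G.Adj x z) \ X with hr
  -- the key counting bound
  have hrcard : ∀ x ∉ S, X'.card ≤ (r x).card := by
    intro x hxS
    set good : Finset V := slots.filter fun y => ∀ z, s(y, z) ∈ c.edges → G.Adj x z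
      with hgood
    have hpart : good.card + (slots.filter fun y =>
        ¬ ∀ z, s(y, z) ∈ c.edges → G.Adj x z).card = slots.card :=
      Finset.card_filter_add_card_filter_not _
    have hbad : (slots.filter fun y => ¬ ∀ z, s(y, z) ∈ c.edges → G.Adj x z) ⊆
        (S.filter fun z => ¬ G.Adj x z).biUnion
          (fun z => slots.filter fun y => s(z, y) ∈ c.edges) := by
      intro y hy
      rw [Finset.mem_filter] at hy
      push_neg at hy
      obtain ⟨z, hz1, hz2⟩ := hy.2
      have hadjyz : G.Adj y z := c.adj_of_mem_edges hz1
      have hzS : z ∈ S := by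
        rcases hvc y z hadjyz with h | h
        · exact absurd h (Finset.mem_sdiff.mp hy.1).2
        · exact h
      refine Finset.mem_biUnion.mpr ⟨z, Finset.mem_filter.mpr ⟨hzS, hz2⟩,
        Finset.mem_filter.mpr ⟨hy.1, ?_⟩⟩
      rw [Sym2.eq_swap]
      exact hz1
    have hbad2 : (slots.filter fun y =>
        ¬ ∀ z, s(y, z) ∈ c.edges → G.Adj x z).card ≤ p * 2 := by
      refine le_trans (Finset.card_le_card hbad) (le_trans
        (Finset.card_biUnion_le_card_mul _ _ 2 fun z _ =>
          filter_nbr_cycle_card hc z slots) ?_)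
      exact Nat.mul_le_mul_right 2 (hnonnbr x hxS)
    have hgsub : good ⊆ (good \ X) ∪ (X ∩ supp) := by
      intro y hy
      by_cases hyX : y ∈ X
      · refine Finset.mem_union_right _ (Finset.mem_inter.mpr ⟨hyX, ?_⟩)
        exact (Finset.mem_sdiff.mp (Finset.mem_filter.mp hy).1).1
      · exact Finset.mem_union_left _ (Finset.mem_sdiff.mpr ⟨hy, hyX⟩)
    have hgcard : good.card ≤ (r x).card + (X ∩ supp).card :=
      le_trans (Finset.card_le_card hgsub) (Finset.card_union_le _ _)
    have hXsplit : (X \ supp).card + (X ∩ supp).card = X.card :=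
      Finset.card_sdiff_add_card_inter _ _
    have hX'c : X'.card = (X \ supp).card := rfl
    omega
  -- Hall's condition and matching
  have hall : ∀ s : Finset {x // x ∈ X'}, s.card ≤ (s.biUnion fun x => r ↑x).card := by
    intro s
    rcases s.eq_empty_or_nonempty with rfl | ⟨x0, hx0⟩
    · simp
    · have hx0S : (↑x0 : V) ∉ S := by
        have : (↑x0 : V) ∈ X := (Finset.mem_sdiff.mp x0.2).1
        exact Finset.mem_compl.mp (hX this)
      have h1 : r ↑x0 ⊆ s.biUnion fun x => r ↑x := fun y hy =>
        Finset.mem_biUnion.mpr ⟨x0, hx0, hy⟩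
      have h2 := hrcard ↑x0 hx0S
      have h3 : s.card ≤ X'.card := by
        calc s.card ≤ Fintype.card {x // x ∈ X'} := Finset.card_le_univ s
          _ = X'.card := Fintype.card_coe _
      calc s.card ≤ X'.card := h3
        _ ≤ (r ↑x0).card := h2
        _ ≤ _ := Finset.card_le_card h1
  obtain ⟨g, hginj, hgmem⟩ :=
    (Finset.all_card_le_biUnion_card_iff_exists_injective fun x : {x // x ∈ X'} => r ↑x).mp
      hall
  set f : V → V := fun y =>
    if h : ∃ x : {x // x ∈ X'}, g x = y then ↑(Classical.choose h) else y with hf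
  have hf_eq_of : ∀ x : {x // x ∈ X'}, f (g x) = ↑x := by
    intro x
    have hex : ∃ x' : {x // x ∈ X'}, g x' = g x := ⟨x, rfl⟩
    rw [hf]
    simp only [dif_pos hex]
    exact congrArg Subtype.val (hginj (Classical.choose_spec hex))
  have hf_cases : ∀ y, f y = y ∨ ∃ x : {x // x ∈ X'}, g x = y ∧ f y = ↑x := by
    intro y
    by_cases h : ∃ x : {x // x ∈ X'}, g x = y
    · obtain ⟨x, hx⟩ := h
      exact Or.inr ⟨x, hx, by rw [← hx, hf_eq_of]⟩
    · exact Or.inl (by rw [hf]; simp only [dif_neg h])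
  have key : ∀ y, f y = y ∨ (y ∈ slots ∧ y ∉ X ∧ f y ∈ X' ∧
      (∀ z, s(y, z) ∈ c.edges → G.Adj (f y) z)) := by
    intro y
    rcases hf_cases y with h | ⟨x, hgx, hfy⟩
    · exact Or.inl h
    · right
      have hy : y ∈ r x := hgx ▸ hgmem x
      have hy1 := Finset.mem_sdiff.mp hy
      have hy2 := Finset.mem_filter.mp hy1.1
      refine ⟨hy2.1, hy1.2, hfy ▸ x.2, fun z hz => ?_⟩
      rw [hfy]
      exact hy2.2 z hz
  have hX'notS : ∀ y, y ∈ X' → y ∉ S := fun y hy =>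
    Finset.mem_compl.mp (hX (Finset.mem_sdiff.mp hy).1)
  -- adjacency is preserved
  have hadj : ∀ a b, s(a, b) ∈ c.edges → G.Adj (f a) (f b) := by
    intro a b hab
    have hab' := c.adj_of_mem_edges hab
    rcases key a with ha | ⟨haslot, -, -, hgooda⟩
    · rcases key b with hb | ⟨hbslot, -, -, hgoodb⟩
      · rwa [ha, hb]
      · rw [ha]
        exact (hgoodb a (by rw [Sym2.eq_swap]; exact hab)).symm
    · rcases key b with hb | ⟨hbslot, -, -, -⟩
      · rw [hb]
        exact hgooda b hab
      · exfalso
        rcases hvc a b hab' with h | h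
        · exact (Finset.mem_sdiff.mp haslot).2 h
        · exact (Finset.mem_sdiff.mp hbslot).2 h
  -- injectivity on the support
  have hinj : ∀ a ∈ c.support, ∀ b ∈ c.support, f a = f b → a = b := by
    intro a ha b hb hfab
    rcases hf_cases a with h1 | ⟨x1, hg1, hf1⟩ <;> rcases hf_cases b with h2 | ⟨x2, hg2, hf2⟩
    · rw [h1, h2] at hfab; exact hfab
    · exfalso
      have hns : (↑x2 : V) ∉ supp := (Finset.mem_sdiff.mp x2.2).2
      apply hns
      rw [hsupp, List.mem_toFinset]
      have : (↑x2 : V) = a := by rw [← hf2, ← hfab, h1]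
      rwa [this]
    · exfalso
      have hns : (↑x1 : V) ∉ supp := (Finset.mem_sdiff.mp x1.2).2
      apply hns
      rw [hsupp, List.mem_toFinset]
      have : (↑x1 : V) = b := by rw [← hf1, hfab, h2]
      rwa [this]
    · have hx12 : x1 = x2 := Subtype.ext (by rw [← hf1, ← hf2, hfab])
      rw [← hg1, ← hg2, hx12]
  refine ⟨f v, mapW f c hadj, isCycle_mapW hc f hadj hinj, by rw [length_mapW]; exact hlen,
    ?_, ?_⟩
  · -- X is contained in the new cycle
    intro x hxX
    rw [support_mapW]
    by_cases hxs : x ∈ supp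
    · have hfx : f x = x := by
        rcases hf_cases x with h | ⟨x1, hg1, -⟩
        · exact h
        · exfalso
          have : g x1 ∈ r x1 := hgmem x1
          rw [hg1] at this
          exact (Finset.mem_sdiff.mp this).2 hxX
      exact List.mem_map.mpr ⟨x, List.mem_toFinset.mp hxs, hfx⟩
    · have hx' : x ∈ X' := Finset.mem_sdiff.mpr ⟨hxX, hxs⟩
      have hgm : g ⟨x, hx'⟩ ∈ r x := hgmem ⟨x, hx'⟩
      have hgs : g ⟨x, hx'⟩ ∈ supp :=
        (Finset.mem_sdiff.mp (Finset.mem_filter.mp (Finset.mem_sdiff.mp hgm).1).1).1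
      exact List.mem_map.mpr ⟨g ⟨x, hx'⟩, List.mem_toFinset.mp hgs, hf_eq_of ⟨x, hx'⟩⟩
  · -- the intersection with S is preserved
    rw [support_mapW]
    ext y
    simp only [Finset.mem_inter, List.mem_toFinset, List.mem_map]
    constructor
    · rintro ⟨hy, hyS⟩
      have hfy : f y = y := by
        rcases key y with h | ⟨hslot, -, -, -⟩
        · exact h
        · exact absurd hyS (Finset.mem_sdiff.mp hslot).2
      exact ⟨⟨y, List.mem_toFinset.mp hy, hfy⟩, hyS⟩
    · rintro ⟨⟨a, ha, rfl⟩, hyS⟩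
      have hfa : f a = a := by
        rcases key a with h | ⟨-, -, hfa', -⟩
        · exact h
        · exact absurd hyS (hX'notS _ hfa')
      refine ⟨?_, hyS⟩
      rw [hsupp, List.mem_toFinset, hfa]
      exact ha
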